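/- Assume in addition that each ρ_j is homogeneous of degree α_j ≥ 1 (ρ_j(rx) = r^{α_j} ρ_j(x) for r > 0). Then ρ(x) = 0 if and only if x = 0, and there exist constants 0 < c ≤ C such that c |x| ≤ Σ_{j=1}^{d} |ρ_j(x)|^{1/α_j} ≤ C |x| for every x ∈ ℝᵐ. -/

import Mathlib

/-- The action of an `m × m` real matrix on `ℝᵐ` (as Euclidean space). -/
noncomputable def mact {m : ℕ} (A : Matrix (Fin m) (Fin m) ℝ)
    (x : EuclideanSpace ℝ (Fin m)) : EuclideanSpace ℝ (Fin m) :=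
  (WithLp.equiv 2 (Fin m → ℝ)).symm (A.mulVec ((WithLp.equiv 2 (Fin m → ℝ)) x))

/-- The Hilbert map `ρ = (ρ₁,…,ρ_d) : ℝᵐ → ℝᵈ` associated to polynomials `ρ₁,…,ρ_d`. -/
noncomputable def evalMap {m d : ℕ} (ρp : Fin d → MvPolynomial (Fin m) ℝ)
    (x : EuclideanSpace ℝ (Fin m)) : EuclideanSpace ℝ (Fin d) :=
  (WithLp.equiv 2 (Fin d → ℝ)).symm (fun j => MvPolynomial.eval (fun i => x i) (ρp j))

/-- If moreover each `ρ_j` is homogeneous of degree `α_j ≥ 1`, then `ρ(x) = 0 ↔ x = 0` and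
`Σ_j |ρ_j(x)|^{1/α_j}` is comparable to `|x|`:
`c |x| ≤ Σ_j |ρ_j(x)|^{1/α_j} ≤ C |x|` for constants `0 < c ≤ C`. -/
theorem stmt7 (m d : ℕ) (hm : 1 ≤ m)
    (K : Subgroup (Matrix.orthogonalGroup (Fin m) ℝ))
    (hK : IsClosed (K : Set (Matrix.orthogonalGroup (Fin m) ℝ)))
    (ρp : Fin d → MvPolynomial (Fin m) ℝ)
    (hρinv : ∀ j, ∀ k ∈ K, ∀ x : EuclideanSpace ℝ (Fin m),
      MvPolynomial.eval (fun i => mact (k : Matrix (Fin m) (Fin m) ℝ) x i) (ρp j) =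
        MvPolynomial.eval (fun i => x i) (ρp j))
    (hρgen : ∀ P : MvPolynomial (Fin m) ℝ,
      (∀ k ∈ K, ∀ x : EuclideanSpace ℝ (Fin m),
        MvPolynomial.eval (fun i => mact (k : Matrix (Fin m) (Fin m) ℝ) x i) P =
          MvPolynomial.eval (fun i => x i) P) →
      P ∈ Algebra.adjoin ℝ (Set.range ρp))
    (α : Fin d → ℕ) (hα : ∀ j, 1 ≤ α j)
    (hhom : ∀ j, ∀ r : ℝ, 0 < r → ∀ x : EuclideanSpace ℝ (Fin m),
      MvPolynomial.eval (fun i => (r • x) i) (ρp j) =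
        r ^ (α j) * MvPolynomial.eval (fun i => x i) (ρp j)) :
    (∀ x : EuclideanSpace ℝ (Fin m), evalMap ρp x = 0 ↔ x = 0) ∧
    ∃ c C : ℝ, 0 < c ∧ c ≤ C ∧
      ∀ x : EuclideanSpace ℝ (Fin m),
        c * ‖x‖ ≤ ∑ j, |MvPolynomial.eval (fun i => x i) (ρp j)| ^ (1 / (α j : ℝ)) ∧
        ∑ j, |MvPolynomial.eval (fun i => x i) (ρp j)| ^ (1 / (α j : ℝ)) ≤ C * ‖x‖ := by
  classical
  -- each ρ_j vanishes at 0
  have hρ0 : ∀ j, MvPolynomial.eval (fun _ : Fin m => (0 : ℝ)) (ρp j) = 0 := by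
    intro j
    have h := hhom j 2 (by norm_num) 0
    have h0 : (fun i => ((2 : ℝ) • (0 : EuclideanSpace ℝ (Fin m))) i) =
        (fun _ : Fin m => (0 : ℝ)) := by
      funext i; simp
    have h0' : (fun i => ((0 : EuclideanSpace ℝ (Fin m))) i) = (fun _ : Fin m => (0 : ℝ)) := by
      funext i; rfl
    rw [h0, h0'] at h
    have hs : (2 : ℝ) ≤ 2 ^ α j := by
      calc (2 : ℝ) = 2 ^ 1 := (pow_one 2).symm
      _ ≤ 2 ^ α j := pow_le_pow_right₀ (by norm_num) (hα j)
    set t := MvPolynomial.eval (fun _ : Fin m => (0 : ℝ)) (ρp j) with ht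
    have h2 : ((2 : ℝ) ^ α j - 1) * t = 0 := by linear_combination -h
    rcases mul_eq_zero.1 h2 with h3 | h3
    · nlinarith
    · exact h3
  -- ρ(x) = 0 implies x = 0
  have hzero : ∀ x : EuclideanSpace ℝ (Fin m),
      (∀ j, MvPolynomial.eval (fun i => x i) (ρp j) = 0) → x = 0 := by
    intro x hx
    set P : MvPolynomial (Fin m) ℝ := ∑ i, (MvPolynomial.X i) ^ 2 with hP
    have hPinv : ∀ k ∈ K, ∀ y : EuclideanSpace ℝ (Fin m),
        MvPolynomial.eval (fun i => mact (k : Matrix (Fin m) (Fin m) ℝ) y i) P =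
          MvPolynomial.eval (fun i => y i) P := by
      intro k hk y
      set A : Matrix (Fin m) (Fin m) ℝ := (k : Matrix (Fin m) (Fin m) ℝ) with hA
      have hAo : A.transpose * A = 1 := by
        have h1 := Matrix.UnitaryGroup.star_mul_self k
        rwa [Matrix.star_eq_conjTranspose, Matrix.conjTranspose_eq_transpose_of_trivial] at h1
      have hcoord : ∀ i, mact A y i = A.mulVec (fun i' => y i') i := by
        intro i
        rfl
      have hdot : dotProduct (A.mulVec (fun i' => y i')) (A.mulVec (fun i' => y i')) =
          dotProduct (fun i' => y i') (fun i' => y i') := by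
        rw [Matrix.dotProduct_mulVec, ← Matrix.mulVec_transpose, Matrix.mulVec_mulVec, hAo,
          Matrix.one_mulVec]
      have hsum : ∑ i, (A.mulVec (fun i' => y i') i) ^ 2 = ∑ i, (y i) ^ 2 := by
        have := hdot
        simp only [dotProduct, ← sq] at this
        exact this
      simp only [hP, map_sum, map_pow, MvPolynomial.eval_X, hcoord]
      exact hsum
    have hPmem := hρgen P hPinv
    have key : MvPolynomial.eval (fun i => x i) P =
        MvPolynomial.eval (fun _ : Fin m => (0 : ℝ)) P := by
      refine Algebra.adjoin_induction ?_ ?_ ?_ ?_ hPmem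
      · rintro q ⟨j, rfl⟩
        rw [hx j, hρ0 j]
      · intro r
        simp [MvPolynomial.algebraMap_eq]
      · intro p q _ _ hp hq
        simp [map_add, hp, hq]
      · intro p q _ _ hp hq
        simp [map_mul, hp, hq]
    have hx2 : ∑ i, (x i) ^ 2 = 0 := by
      have h1 : MvPolynomial.eval (fun i => x i) P = ∑ i, (x i) ^ 2 := by
        simp [hP]
      have h2 : MvPolynomial.eval (fun _ : Fin m => (0 : ℝ)) P = 0 := by
        simp [hP]
      rw [h1, h2] at key
      exact key
    have : ∀ i, (x i) ^ 2 = 0 := by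
      intro i
      have hnn : ∀ i ∈ Finset.univ, (0 : ℝ) ≤ (x i) ^ 2 := fun i _ => sq_nonneg _
      exact (Finset.sum_eq_zero_iff_of_nonneg hnn).1 hx2 i (Finset.mem_univ i)
    ext i
    exact pow_eq_zero_iff (n := 2) (by norm_num) |>.1 (this i)
  -- the comparison function
  set f : EuclideanSpace ℝ (Fin m) → ℝ :=
    fun x => ∑ j, |MvPolynomial.eval (fun i => x i) (ρp j)| ^ (1 / (α j : ℝ)) with hf
  have hαR : ∀ j, (0 : ℝ) < (α j : ℝ) := fun j => by
    exact_mod_cast Nat.lt_of_lt_of_le Nat.zero_lt_one (hα j)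
  have hfc : Continuous f := by
    apply continuous_finset_sum
    intro j _
    have h1 : Continuous fun x : EuclideanSpace ℝ (Fin m) =>
        |MvPolynomial.eval (fun i => x i) (ρp j)| := by
      apply Continuous.abs
      exact (MvPolynomial.continuous_eval (p := ρp j)).comp
        (continuous_pi fun i => (continuous_apply i).comp (PiLp.continuous_ofLp 2 _))
    exact (Real.continuous_rpow_const (by positivity)).comp h1
  have hf_nonneg : ∀ x, 0 ≤ f x := by
    intro x
    apply Finset.sum_nonneg
    intro j _
    exact Real.rpow_nonneg (abs_nonneg _) _
  have hf_pos : ∀ x : EuclideanSpace ℝ (Fin m), x ≠ 0 → 0 < f x := by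
    intro x hx
    rcases lt_or_eq_of_le (hf_nonneg x) with h | h
    · exact h
    exfalso
    apply hx
    apply hzero
    intro j
    have hterm : ∀ j' ∈ Finset.univ,
        (0:ℝ) ≤ |MvPolynomial.eval (fun i => x i) (ρp j')| ^ (1 / (α j' : ℝ)) :=
      fun j' _ => Real.rpow_nonneg (abs_nonneg _) _
    have := (Finset.sum_eq_zero_iff_of_nonneg hterm).1 h.symm j (Finset.mem_univ j)
    have habs : |MvPolynomial.eval (fun i => x i) (ρp j)| = 0 := by
      by_contra hne
      have h0 : (0:ℝ) < |MvPolynomial.eval (fun i => x i) (ρp j)| :=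
        lt_of_le_of_ne (abs_nonneg _) (Ne.symm hne)
      have := Real.rpow_pos_of_pos h0 (1 / (α j : ℝ))
      linarith
    exact abs_eq_zero.1 habs
  have hf_hom : ∀ r : ℝ, 0 < r → ∀ x, f (r • x) = r * f x := by
    intro r hr x
    simp only [hf, Finset.mul_sum]
    apply Finset.sum_congr rfl
    intro j _
    rw [hhom j r hr x, abs_mul, abs_of_pos (pow_pos hr _),
      Real.mul_rpow (pow_nonneg hr.le _) (abs_nonneg _)]
    congr 1
    rw [← Real.rpow_natCast r (α j), ← Real.rpow_mul hr.le]
    rw [mul_one_div, div_self (ne_of_gt (hαR j)), Real.rpow_one]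
  have hf0 : f 0 = 0 := by
    simp only [hf]
    apply Finset.sum_eq_zero
    intro j _
    have h0' : (fun i => ((0 : EuclideanSpace ℝ (Fin m))) i) = (fun _ : Fin m => (0 : ℝ)) := by
      funext i; rfl
    rw [h0', hρ0 j, abs_zero, Real.zero_rpow (one_div_ne_zero (ne_of_gt (hαR j)))]
  -- sphere is nonempty and compact
  have hmne : Nonempty (Fin m) := ⟨⟨0, hm⟩⟩
  set e : EuclideanSpace ℝ (Fin m) := EuclideanSpace.single (⟨0, hm⟩ : Fin m) (1 : ℝ) with he
  have heS : e ∈ Metric.sphere (0 : EuclideanSpace ℝ (Fin m)) 1 := by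
    simp [he, EuclideanSpace.norm_single]
  obtain ⟨a, haS, hamin'⟩ := (isCompact_sphere (0 : EuclideanSpace ℝ (Fin m)) 1).exists_isMinOn
    ⟨e, heS⟩ hfc.continuousOn
  obtain ⟨b, hbS, hbmax'⟩ := (isCompact_sphere (0 : EuclideanSpace ℝ (Fin m)) 1).exists_isMaxOn
    ⟨e, heS⟩ hfc.continuousOn
  have hamin : ∀ z ∈ Metric.sphere (0 : EuclideanSpace ℝ (Fin m)) 1, f a ≤ f z := hamin'
  have hbmax : ∀ z ∈ Metric.sphere (0 : EuclideanSpace ℝ (Fin m)) 1, f z ≤ f b := hbmax'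
  have ha_ne : a ≠ 0 := by
    intro h
    rw [h] at haS
    simp at haS
  have hc_pos : 0 < f a := hf_pos a ha_ne
  have hcC : f a ≤ f b := le_trans (hamin b hbS) (le_refl _)
  constructor
  · intro x
    constructor
    · intro h
      apply hzero
      intro j
      have hj : evalMap ρp x j = 0 := by rw [h]; rfl
      simpa [evalMap, PiLp.toLp_apply] using hj
    · rintro rfl
      have : ∀ j, MvPolynomial.eval (fun i => (0 : EuclideanSpace ℝ (Fin m)) i) (ρp j) = 0 := by
        intro j
        have h0' : (fun i => ((0 : EuclideanSpace ℝ (Fin m))) i) =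
            (fun _ : Fin m => (0 : ℝ)) := by funext i; rfl
        rw [h0']; exact hρ0 j
      ext j
      simpa [evalMap, PiLp.toLp_apply] using this j
  · refine ⟨f a, f b, hc_pos, hcC, ?_⟩
    intro x
    rcases eq_or_ne x 0 with rfl | hx
    · constructor
      · rw [norm_zero, mul_zero]
        exact hf_nonneg 0
      · have : f 0 = 0 := hf0
        rw [norm_zero, mul_zero]
        calc (∑ j, |MvPolynomial.eval
            (fun i => (0 : EuclideanSpace ℝ (Fin m)) i) (ρp j)| ^ (1 / (α j : ℝ))) = f 0 := rfl
        _ ≤ 0 := le_of_eq hf0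
    · have hnx : 0 < ‖x‖ := norm_pos_iff.2 hx
      set y : EuclideanSpace ℝ (Fin m) := ‖x‖⁻¹ • x with hy
      have hyS : y ∈ Metric.sphere (0 : EuclideanSpace ℝ (Fin m)) 1 := by
        simp [hy, norm_smul, abs_of_pos (inv_pos.2 hnx), inv_mul_cancel₀ (ne_of_gt hnx)]
      have hxy : x = ‖x‖ • y := by
        rw [hy, smul_smul, mul_inv_cancel₀ (ne_of_gt hnx), one_smul]
      have hfx : f x = ‖x‖ * f y := by
        conv_lhs => rw [hxy]
        exact hf_hom ‖x‖ hnx y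
      have h1 : f a ≤ f y := hamin y hyS
      have h2 : f y ≤ f b := hbmax y hyS
      constructor
      · calc f a * ‖x‖ ≤ f y * ‖x‖ := by nlinarith
        _ = f x := by rw [hfx, mul_comm]
      · calc f x = ‖x‖ * f y := hfx
        _ ≤ ‖x‖ * f b := by nlinarith
        _ = f b * ‖x‖ := mul_comm _ _
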